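/- Let (Ω, 𝓕, P) be a probability space and U : Ω → ℝ a bounded measurable random variable that is not P-almost surely constant, with π := P(U = esssup U) > 0. For η > 0 let Q^η be the exponentially tilted probability measure with density dQ^η/dP = e^{ηU} / E_P[e^{ηU}]. Then for every ε with 0 < ε < log(1/π) there exists a unique η* > 0 such that D_KL(Q^{η*} ‖ P) = ε. -/

import Mathlib

open MeasureTheory Real Filter Set Classical Topology

/-- Kullback–Leibler divergence: `E_P[(dQ/dP) log (dQ/dP)]` if `Q ≪ P`, and `+∞` otherwise. -/
noncomputable def KLdiv {Ω : Type*} [MeasurableSpace Ω] (Q P : Measure Ω) : EReal :=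
  if Q ≪ P then
    ((∫ ω, (Q.rnDeriv P ω).toReal * Real.log (Q.rnDeriv P ω).toReal ∂P : ℝ) : EReal)
  else ⊤

noncomputable section TiltAuxSec

namespace TiltAux

variable {Ω : Type*} [MeasurableSpace Ω] (P : Measure Ω) (U : Ω → ℝ)

def Zf (η : ℝ) : ℝ := ∫ ω, exp (η * U ω) ∂P
def Nf (η : ℝ) : ℝ := ∫ ω, U ω * exp (η * U ω) ∂P
def N2f (η : ℝ) : ℝ := ∫ ω, U ω ^ 2 * exp (η * U ω) ∂P
def Ff (η : ℝ) : ℝ := η * Nf P U η / Zf P U η - log (Zf P U η)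

variable {P U}
variable [IsProbabilityMeasure P] {C : ℝ}

lemma integrable_bdd_exp (hU : Measurable U) (hC : ∀ ω, |U ω| ≤ C)
    {g : Ω → ℝ} (hg : Measurable g) {B : ℝ} (hB : ∀ ω, |g ω| ≤ B) (η : ℝ) :
    Integrable (fun ω => g ω * exp (η * U ω)) P := by
  refine (integrable_const (B * exp (|η| * C))).mono'
    ((hg.mul ((measurable_const.mul hU).exp)).aestronglyMeasurable)
    (ae_of_all _ fun ω => ?_)
  have h1 : η * U ω ≤ |η| * C := by
    calc η * U ω ≤ |η * U ω| := le_abs_self _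
    _ = |η| * |U ω| := abs_mul _ _
    _ ≤ |η| * C := mul_le_mul_of_nonneg_left (hC ω) (abs_nonneg η)
  have : ‖g ω * exp (η * U ω)‖ = |g ω| * exp (η * U ω) := by
    rw [norm_mul, Real.norm_eq_abs, Real.norm_eq_abs, abs_exp]
  rw [this]
  exact mul_le_mul (hB ω) (exp_le_exp.2 h1) (exp_pos _).le ((abs_nonneg _).trans (hB ω))

lemma integrable_exp' (hU : Measurable U) (hC : ∀ ω, |U ω| ≤ C) (η : ℝ) :
    Integrable (fun ω => exp (η * U ω)) P := by
  have := integrable_bdd_exp (P := P) hU hC (g := fun _ => (1:ℝ)) measurable_const (B := 1)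
    (fun ω => by simp) η
  simpa using this

lemma Zf_pos (hU : Measurable U) (hC : ∀ ω, |U ω| ≤ C) (η : ℝ) : 0 < Zf P U η :=
  integral_exp_pos (integrable_exp' hU hC η)

lemma hasDerivAt_Zf (hU : Measurable U) (hC : ∀ ω, |U ω| ≤ C) (η₀ : ℝ) :
    HasDerivAt (Zf P U) (Nf P U η₀) η₀ := by
  have := hasDerivAt_integral_of_dominated_loc_of_deriv_le (μ := P)
    (F := fun x ω => exp (x * U ω)) (F' := fun x ω => U ω * exp (x * U ω))
    (x₀ := η₀) (bound := fun ω => C * exp ((|η₀| + 1) * C)) (s := Metric.ball η₀ 1) (Metric.ball_mem_nhds η₀ one_pos)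
    (Eventually.of_forall fun x => ((measurable_const.mul hU).exp).aestronglyMeasurable)
    (integrable_exp' hU hC η₀)
    ((hU.mul ((measurable_const.mul hU).exp)).aestronglyMeasurable)
    (ae_of_all _ fun ω x hx => ?_) (integrable_const _)
    (ae_of_all _ fun ω x hx => ?_)
  · exact this.2
  · have hx' : |x| ≤ |η₀| + 1 := by
      have := mem_ball_iff_norm.1 hx
      have h2 : |x - η₀| < 1 := this
      calc |x| = |x - η₀ + η₀| := by ring_nf
      _ ≤ |x - η₀| + |η₀| := abs_add_le _ _
      _ ≤ |η₀| + 1 := by linarith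
    have hC0 : 0 ≤ C := (abs_nonneg _).trans (hC ω)
    have hxU : x * U ω ≤ (|η₀| + 1) * C := by
      calc x * U ω ≤ |x * U ω| := le_abs_self _
      _ = |x| * |U ω| := abs_mul _ _
      _ ≤ (|η₀| + 1) * C := mul_le_mul hx' (hC ω) (abs_nonneg _) (by positivity)
    have : ‖U ω * exp (x * U ω)‖ = |U ω| * exp (x * U ω) := by
      rw [norm_mul, Real.norm_eq_abs, Real.norm_eq_abs, abs_exp]
    rw [this]
    exact mul_le_mul (hC ω) (exp_le_exp.2 hxU) (exp_pos _).le hC0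
  · simpa [mul_comm] using ((hasDerivAt_id x).mul_const (U ω)).exp

lemma hasDerivAt_Nf (hU : Measurable U) (hC : ∀ ω, |U ω| ≤ C) (η₀ : ℝ) :
    HasDerivAt (Nf P U) (N2f P U η₀) η₀ := by
  have := hasDerivAt_integral_of_dominated_loc_of_deriv_le (μ := P)
    (F := fun x ω => U ω * exp (x * U ω)) (F' := fun x ω => U ω ^ 2 * exp (x * U ω))
    (x₀ := η₀) (bound := fun ω => C ^ 2 * exp ((|η₀| + 1) * C)) (s := Metric.ball η₀ 1) (Metric.ball_mem_nhds η₀ one_pos)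
    (Eventually.of_forall fun x => (hU.mul ((measurable_const.mul hU).exp)).aestronglyMeasurable)
    (integrable_bdd_exp (P := P) hU hC hU hC η₀)
    (((hU.pow_const 2).mul ((measurable_const.mul hU).exp)).aestronglyMeasurable)
    (ae_of_all _ fun ω x hx => ?_) (integrable_const _)
    (ae_of_all _ fun ω x hx => ?_)
  · exact this.2
  · have hx' : |x| ≤ |η₀| + 1 := by
      have h2 : |x - η₀| < 1 := mem_ball_iff_norm.1 hx
      calc |x| = |x - η₀ + η₀| := by ring_nf
      _ ≤ |x - η₀| + |η₀| := abs_add_le _ _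
      _ ≤ |η₀| + 1 := by linarith
    have hC0 : 0 ≤ C := (abs_nonneg _).trans (hC ω)
    have hxU : x * U ω ≤ (|η₀| + 1) * C := by
      calc x * U ω ≤ |x * U ω| := le_abs_self _
      _ = |x| * |U ω| := abs_mul _ _
      _ ≤ (|η₀| + 1) * C := mul_le_mul hx' (hC ω) (abs_nonneg _) (by positivity)
    have hU2 : |U ω ^ 2| ≤ C ^ 2 := by
      rw [abs_of_nonneg (sq_nonneg _), ← sq_abs]
      exact pow_le_pow_left₀ (abs_nonneg _) (hC ω) 2
    have : ‖U ω ^ 2 * exp (x * U ω)‖ = |U ω ^ 2| * exp (x * U ω) := by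
      rw [norm_mul, Real.norm_eq_abs, Real.norm_eq_abs, abs_exp]
    rw [this]
    exact mul_le_mul hU2 (exp_le_exp.2 hxU) (exp_pos _).le (by positivity)
  · have h := (((hasDerivAt_id x).mul_const (U ω)).exp).const_mul (U ω)
    refine h.congr_deriv ?_
    simp only [id, one_mul]; ring

lemma hasDerivAt_Ff (hU : Measurable U) (hC : ∀ ω, |U ω| ≤ C) (η : ℝ) :
    HasDerivAt (Ff P U)
      (η * (N2f P U η * Zf P U η - (Nf P U η) ^ 2) / (Zf P U η) ^ 2) η := by
  have hZ := hasDerivAt_Zf (P := P) hU hC η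
  have hN := hasDerivAt_Nf (P := P) hU hC η
  have hZpos := Zf_pos (P := P) hU hC η
  have h1 : HasDerivAt (fun x => x * Nf P U x / Zf P U x)
      (((1 * Nf P U η + η * N2f P U η) * Zf P U η - η * Nf P U η * Nf P U η)
        / (Zf P U η) ^ 2) η :=
    ((hasDerivAt_id η).mul hN).div hZ hZpos.ne'
  have h2 : HasDerivAt (fun x => log (Zf P U x)) (Nf P U η / Zf P U η) η := by
    simpa using hZ.log hZpos.ne'
  have h3 := h1.sub h2
  have : Ff P U = fun x => x * Nf P U x / Zf P U x - log (Zf P U x) := rfl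
  rw [this]
  refine h3.congr_deriv ?_
  field_simp
  ring

lemma var_pos (hU : Measurable U) (hC : ∀ ω, |U ω| ≤ C)
    (hnc : ¬ ∃ c : ℝ, ∀ᵐ ω ∂P, U ω = c) (η : ℝ) :
    0 < N2f P U η * Zf P U η - (Nf P U η) ^ 2 := by
  have hZpos := Zf_pos (P := P) hU hC η
  set m : ℝ := Nf P U η / Zf P U η with hm
  have hgmeas : Measurable fun ω => (U ω - m) ^ 2 := (hU.sub measurable_const).pow_const 2
  have hgbd : ∀ ω, |(U ω - m) ^ 2| ≤ (C + |m|) ^ 2 := by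
    intro ω
    rw [abs_of_nonneg (sq_nonneg _), ← sq_abs]
    refine pow_le_pow_left₀ (abs_nonneg _) ?_ 2
    calc |U ω - m| ≤ |U ω| + |m| := abs_sub _ _
    _ ≤ C + |m| := by linarith [hC ω]
  have hWint : Integrable (fun ω => (U ω - m) ^ 2 * exp (η * U ω)) P :=
    integrable_bdd_exp (P := P) hU hC hgmeas hgbd η
  set W : ℝ := ∫ ω, (U ω - m) ^ 2 * exp (η * U ω) ∂P with hWdef
  have hWnonneg : 0 ≤ W :=
    integral_nonneg fun ω => mul_nonneg (sq_nonneg _) (exp_pos _).le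
  have hWne : W ≠ 0 := by
    intro hW0
    have h := (integral_eq_zero_iff_of_nonneg
      (fun ω => mul_nonneg (sq_nonneg _) (exp_pos _).le) hWint).1 hW0
    refine hnc ⟨m, ?_⟩
    filter_upwards [h] with ω hω
    have : (U ω - m) ^ 2 * exp (η * U ω) = 0 := hω
    have h2 : (U ω - m) ^ 2 = 0 := by
      rcases mul_eq_zero.1 this with h | h
      · exact h
      · exact absurd h (exp_ne_zero _)
    have := pow_eq_zero_iff (n := 2) (by norm_num) |>.1 h2
    linarith
  have hWpos : 0 < W := lt_of_le_of_ne hWnonneg (Ne.symm hWne)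
  have hexpand : ∀ ω : Ω, (U ω - m) ^ 2 * exp (η * U ω)
      = U ω ^ 2 * exp (η * U ω) - (2 * m) * (U ω * exp (η * U ω))
        + m ^ 2 * exp (η * U ω) := fun ω => by ring
  have hi1 : Integrable (fun ω => U ω * exp (η * U ω)) P :=
    integrable_bdd_exp (P := P) hU hC hU hC η
  have hi2 : Integrable (fun ω => U ω ^ 2 * exp (η * U ω)) P :=
    integrable_bdd_exp (P := P) hU hC (hU.pow_const 2)
      (fun ω => by
        rw [abs_of_nonneg (sq_nonneg _), ← sq_abs]
        exact pow_le_pow_left₀ (abs_nonneg _) (hC ω) 2) η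
  have hie := integrable_exp' (P := P) hU hC η
  have hWeq : W = N2f P U η - 2 * m * Nf P U η + m ^ 2 * Zf P U η := by
    have e1 : ∫ ω, (U ω ^ 2 * exp (η * U ω) - 2 * m * (U ω * exp (η * U ω))
          + m ^ 2 * exp (η * U ω)) ∂P
        = (∫ ω, (U ω ^ 2 * exp (η * U ω) - 2 * m * (U ω * exp (η * U ω))) ∂P)
          + ∫ ω, m ^ 2 * exp (η * U ω) ∂P :=
      integral_add (hi2.sub (hi1.const_mul _)) (hie.const_mul _)
    have e2 : ∫ ω, (U ω ^ 2 * exp (η * U ω) - 2 * m * (U ω * exp (η * U ω))) ∂P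
        = (∫ ω, U ω ^ 2 * exp (η * U ω) ∂P)
          - ∫ ω, 2 * m * (U ω * exp (η * U ω)) ∂P :=
      integral_sub hi2 (hi1.const_mul _)
    rw [hWdef]
    simp_rw [hexpand]
    rw [e1, e2, integral_const_mul, integral_const_mul]
    rfl
  have key : N2f P U η * Zf P U η - (Nf P U η) ^ 2 = Zf P U η * W := by
    rw [hWeq, hm]
    field_simp
    ring
  rw [key]
  exact mul_pos hZpos hWpos

lemma Ff_strictMono (hU : Measurable U) (hC : ∀ ω, |U ω| ≤ C)
    (hnc : ¬ ∃ c : ℝ, ∀ᵐ ω ∂P, U ω = c) :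
    StrictMonoOn (Ff P U) (Ici 0) := by
  refine strictMonoOn_of_deriv_pos (convex_Ici 0)
    (fun x _ => (hasDerivAt_Ff (P := P) hU hC x).continuousAt.continuousWithinAt)
    (fun x hx => ?_)
  rw [interior_Ici] at hx
  rw [(hasDerivAt_Ff (P := P) hU hC x).deriv]
  exact div_pos (mul_pos hx (var_pos (P := P) hU hC hnc x)) (pow_pos (Zf_pos (P := P) hU hC x) 2)

lemma Ff_zero : Ff P U 0 = 0 := by
  have hZ0 : Zf P U 0 = 1 := by simp [Zf]
  simp [Ff, hZ0]

lemma tendsto_self_mul_exp_atBot : Tendsto (fun x : ℝ => x * exp x) atBot (𝓝 0) := by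
  have h := ((tendsto_pow_mul_exp_neg_atTop_nhds_zero 1).comp tendsto_neg_atBot_atTop).neg
  simpa [Function.comp_def, pow_one, neg_mul] using h

lemma abs_mul_exp_le_one {x : ℝ} (hx : x ≤ 0) : |x * exp x| ≤ 1 := by
  have h1 : -x ≤ exp (-x) := by linarith [Real.add_one_le_exp (-x)]
  have h2 : |x * exp x| = (-x) * exp x := by
    rw [abs_mul, abs_exp, abs_of_nonpos hx]
  rw [h2]
  calc (-x) * exp x ≤ exp (-x) * exp x := mul_le_mul_of_nonneg_right h1 (exp_pos _).le
  _ = 1 := by rw [← exp_add]; simp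

lemma Ff_tendsto (hU : Measurable U) (hC : ∀ ω, |U ω| ≤ C)
    (hπ : 0 < (P {ω | U ω = essSup U P}).toReal) :
    Tendsto (Ff P U) atTop (𝓝 (- log (P {ω | U ω = essSup U P}).toReal)) := by
  set M := essSup U P with hM
  have hSmeas : MeasurableSet {ω | U ω = M} := hU (measurableSet_singleton M)
  have hVmeas : Measurable fun ω => U ω - M := hU.sub measurable_const
  have hVbd : ∀ ω, |U ω - M| ≤ C + |M| := fun ω => by
    calc |U ω - M| ≤ |U ω| + |M| := abs_sub _ _
    _ ≤ C + |M| := by linarith [hC ω]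
  have haeM : ∀ᵐ ω ∂P, U ω ≤ M :=
    ae_le_essSup (Filter.isBoundedUnder_of ⟨C, fun ω => (abs_le.1 (hC ω)).2⟩)
  have hZt_pos : ∀ η : ℝ, 0 < ∫ ω, exp (η * (U ω - M)) ∂P := fun η =>
    integral_exp_pos (integrable_exp' (U := fun ω => U ω - M) hVmeas hVbd η)
  -- the identity
  have hFeq : ∀ η : ℝ, Ff P U η
      = (∫ ω, (η * (U ω - M)) * exp (η * (U ω - M)) ∂P)
          / (∫ ω, exp (η * (U ω - M)) ∂P)
        - log (∫ ω, exp (η * (U ω - M)) ∂P) := by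
    intro η
    have hiV : Integrable (fun ω => (η * (U ω - M)) * exp (η * (U ω - M))) P :=
      integrable_bdd_exp (P := P) (U := fun ω => U ω - M) hVmeas hVbd
        (measurable_const.mul hVmeas) (B := |η| * (C + |M|))
        (fun ω => by rw [Pi.mul_apply, abs_mul]; exact mul_le_mul_of_nonneg_left (hVbd ω) (abs_nonneg _)) η
    have hiVe : Integrable (fun ω => exp (η * (U ω - M))) P :=
      integrable_exp' hVmeas hVbd η
    have h1 : (∫ ω, exp (η * U ω) ∂P) = exp (η * M) * ∫ ω, exp (η * (U ω - M)) ∂P := by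
      rw [← integral_const_mul]
      congr 1
      funext ω
      rw [← exp_add]
      ring_nf
    have h2 : η * Nf P U η = exp (η * M)
        * ((∫ ω, (η * (U ω - M)) * exp (η * (U ω - M)) ∂P)
            + η * M * ∫ ω, exp (η * (U ω - M)) ∂P) := by
      have e0 : ∀ ω : Ω, η * (U ω * exp (η * U ω))
          = exp (η * M) * ((η * (U ω - M)) * exp (η * (U ω - M))
             + (η * M) * exp (η * (U ω - M))) := by
        intro ω
        have he : exp (η * U ω) = exp (η * M) * exp (η * (U ω - M)) := by
          rw [← exp_add]; ring_nf
        rw [he]; ring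
      calc η * Nf P U η = ∫ ω, η * (U ω * exp (η * U ω)) ∂P :=
            (integral_const_mul _ _).symm
      _ = ∫ ω, exp (η * M) * ((η * (U ω - M)) * exp (η * (U ω - M))
             + (η * M) * exp (η * (U ω - M))) ∂P := by simp_rw [e0]
      _ = _ := by
          rw [integral_const_mul, integral_add hiV (hiVe.const_mul _), integral_const_mul]
    have hFf : Ff P U η = η * Nf P U η / (∫ ω, exp (η * U ω) ∂P)
        - log (∫ ω, exp (η * U ω) ∂P) := rfl
    rw [hFf, h1, h2, log_mul (exp_ne_zero _) (hZt_pos η).ne', log_exp,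
      mul_div_mul_left _ _ (exp_ne_zero _), add_div, mul_div_assoc,
      div_self (hZt_pos η).ne', mul_one]
    ring
  -- limit of the denominator
  have hZt_tendsto : Tendsto (fun η : ℝ => ∫ ω, exp (η * (U ω - M)) ∂P) atTop
      (𝓝 ((P {ω | U ω = M}).toReal)) := by
    have hind : ∫ ω, ({ω | U ω = M}).indicator (fun _ => (1:ℝ)) ω ∂P
        = (P {ω | U ω = M}).toReal := by
      rw [integral_indicator_const (1:ℝ) hSmeas]; simp; rfl
    rw [← hind]
    refine tendsto_integral_filter_of_dominated_convergence (fun _ => (1:ℝ))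
      (Eventually.of_forall fun η =>
        ((measurable_const.mul hVmeas).exp).aestronglyMeasurable) ?_ (integrable_const _) ?_
    · filter_upwards [eventually_ge_atTop (0:ℝ)] with η hη
      filter_upwards [haeM] with ω hω
      rw [Real.norm_eq_abs, abs_exp]
      have : η * (U ω - M) ≤ 0 :=
        mul_nonpos_iff.2 (Or.inl ⟨hη, sub_nonpos.2 hω⟩)
      calc exp (η * (U ω - M)) ≤ exp 0 := exp_le_exp.2 this
      _ = 1 := exp_zero
    · filter_upwards [haeM] with ω hω
      by_cases hωM : U ω = M
      · have : ∀ η : ℝ, exp (η * (U ω - M)) = 1 := fun η => by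
          rw [hωM]; simp
        simp_rw [this]
        have hmem : ω ∈ {ω | U ω = M} := hωM
        rw [indicator_of_mem hmem]
        exact tendsto_const_nhds
      · have hlt : U ω < M := lt_of_le_of_ne hω hωM
        have hneg : U ω - M < 0 := sub_neg.2 hlt
        have hmem : ω ∉ {ω | U ω = M} := hωM
        rw [indicator_of_notMem hmem]
        exact tendsto_exp_atBot.comp (tendsto_id.atTop_mul_const_of_neg hneg)
  -- limit of the numerator
  have hG_tendsto : Tendsto
      (fun η : ℝ => ∫ ω, (η * (U ω - M)) * exp (η * (U ω - M)) ∂P) atTop (𝓝 0) := by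
    have h0 : ∫ ω, (0:ℝ) ∂P = 0 := integral_zero _ _
    rw [← h0]
    refine tendsto_integral_filter_of_dominated_convergence (fun _ => (1:ℝ))
      (Eventually.of_forall fun η =>
        ((measurable_const.mul hVmeas).mul
          ((measurable_const.mul hVmeas).exp)).aestronglyMeasurable)
      ?_ (integrable_const _) ?_
    · filter_upwards [eventually_ge_atTop (0:ℝ)] with η hη
      filter_upwards [haeM] with ω hω
      have : η * (U ω - M) ≤ 0 :=
        mul_nonpos_iff.2 (Or.inl ⟨hη, sub_nonpos.2 hω⟩)
      rw [Real.norm_eq_abs]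
      exact abs_mul_exp_le_one this
    · filter_upwards [haeM] with ω hω
      by_cases hωM : U ω = M
      · have : ∀ η : ℝ, (η * (U ω - M)) * exp (η * (U ω - M)) = 0 := fun η => by
          rw [hωM]; simp
        simp_rw [this]
        exact tendsto_const_nhds
      · have hneg : U ω - M < 0 := sub_neg.2 (lt_of_le_of_ne hω hωM)
        exact tendsto_self_mul_exp_atBot.comp (tendsto_id.atTop_mul_const_of_neg hneg)
  -- combine
  have hlim : Tendsto
      (fun η : ℝ => (∫ ω, (η * (U ω - M)) * exp (η * (U ω - M)) ∂P)
          / (∫ ω, exp (η * (U ω - M)) ∂P)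
        - log (∫ ω, exp (η * (U ω - M)) ∂P)) atTop
      (𝓝 (0 / (P {ω | U ω = M}).toReal - log (P {ω | U ω = M}).toReal)) :=
    (hG_tendsto.div hZt_tendsto hπ.ne').sub
      (((Real.continuousAt_log hπ.ne').tendsto).comp hZt_tendsto)
  have hlim' := hlim.congr (fun η => (hFeq η).symm)
  simpa using hlim'

lemma KL_eq (hU : Measurable U) (hC : ∀ ω, |U ω| ≤ C) (η : ℝ) :
    KLdiv (P.tilted fun ω => η * U ω) P = ((Ff P U η : ℝ) : EReal) := by
  rw [KLdiv, if_pos (tilted_absolutelyContinuous P _)]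
  congr 1
  have hrn := rnDeriv_tilted_left_self (μ := P) (f := fun ω => η * U ω)
    ((measurable_const.mul hU).aemeasurable)
  have hZpos := Zf_pos (P := P) hU hC η
  have hZ : Zf P U η = ∫ x, exp (η * U x) ∂P := rfl
  have heq : (fun ω => (((P.tilted fun ω => η * U ω).rnDeriv P ω).toReal)
      * log (((P.tilted fun ω => η * U ω).rnDeriv P ω).toReal))
      =ᵐ[P] fun ω => (η / Zf P U η) * (U ω * exp (η * U ω))
        - (log (Zf P U η) / Zf P U η) * exp (η * U ω) := by
    filter_upwards [hrn] with ω h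
    rw [h, ← hZ, ENNReal.toReal_ofReal (div_nonneg (exp_pos _).le hZpos.le),
      log_div (exp_ne_zero _) hZpos.ne', log_exp]
    ring
  rw [integral_congr_ae heq,
    integral_sub ((integrable_bdd_exp (P := P) hU hC hU hC η).const_mul _)
      ((integrable_exp' hU hC η).const_mul _),
    integral_const_mul, integral_const_mul]
  show (η / Zf P U η) * Nf P U η - (log (Zf P U η) / Zf P U η) * Zf P U η = Ff P U η
  have hFf : Ff P U η = η * Nf P U η / Zf P U η - log (Zf P U η) := rfl
  rw [hFf]
  field_simp

end TiltAux

end TiltAuxSec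

open TiltAux in
/-- For a bounded, non-a.s.-constant random variable `U` with `π = P(U = esssup U) > 0`,
and any `0 < ε < log(1/π)`, there is a unique `η* > 0` with `D_KL(Q^{η*} ‖ P) = ε`,
where `Q^η` is the exponential tilting of `P` by `ηU`. -/
theorem exists_unique_tilt_parameter
    {Ω : Type*} [MeasurableSpace Ω] (P : Measure Ω) [IsProbabilityMeasure P]
    (U : Ω → ℝ) (hU : Measurable U) (hbd : ∃ C : ℝ, ∀ ω, |U ω| ≤ C)
    (hnc : ¬ ∃ c : ℝ, ∀ᵐ ω ∂P, U ω = c)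
    (hπ : 0 < P {ω | U ω = essSup U P})
    (ε : ℝ) (hε0 : 0 < ε)
    (hεlt : ε < Real.log (1 / (P {ω | U ω = essSup U P}).toReal)) :
    ∃! η : ℝ, 0 < η ∧ KLdiv (P.tilted fun ω => η * U ω) P = (ε : EReal) := by
  obtain ⟨C₀, hC₀⟩ := hbd
  have hC : ∀ ω, |U ω| ≤ |C₀| := fun ω => (hC₀ ω).trans (le_abs_self C₀)
  have hπr : 0 < (P {ω | U ω = essSup U P}).toReal :=
    ENNReal.toReal_pos hπ.ne' (measure_ne_top _ _)
  have hεlt' : ε < - log (P {ω | U ω = essSup U P}).toReal := by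
    rwa [one_div, log_inv] at hεlt
  have hT := Ff_tendsto (P := P) hU hC hπr
  have hmono := Ff_strictMono (P := P) hU hC hnc
  obtain ⟨η₀, hη₀⟩ := ((hT.eventually (eventually_gt_nhds hεlt')).and
    (eventually_gt_atTop 0)).exists
  obtain ⟨hFη₀, hη₀pos⟩ := hη₀
  have hcont : ContinuousOn (Ff P U) (Icc 0 η₀) := fun x _ =>
    (hasDerivAt_Ff (P := P) hU hC x).continuousAt.continuousWithinAt
  have hmem : ε ∈ Ioo (Ff P U 0) (Ff P U η₀) := by
    rw [Ff_zero (P := P) (U := U)]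
    exact ⟨hε0, hFη₀⟩
  obtain ⟨η, hηmem, hFη⟩ := intermediate_value_Ioo hη₀pos.le hcont hmem
  refine ⟨η, ⟨hηmem.1, ?_⟩, ?_⟩
  · rw [KL_eq (P := P) hU hC η, hFη]
  · rintro y ⟨hy, hKL⟩
    rw [KL_eq (P := P) hU hC y] at hKL
    have hFy : Ff P U y = ε := by exact_mod_cast hKL
    exact hmono.injOn (mem_Ici.2 hy.le) (mem_Ici.2 hηmem.1.le) (hFy.trans hFη.symm)
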